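/- arXiv:1610.02710 — 5 statements merged into one kernel-verified Lean document; each statement's English description precedes it below -/
import Mathlib

section
/- Disjunction Property: for all MT₀-formulas φ and ψ, if ⊨φ∨ψ then ⊨φ or ⊨ψ. -/
/-- Classical modal formulas: α ::= p | ⊥ | ¬α | α∧α | α⊗α | α→α | □α | ◇α. -/
inductive CForm : Type where
  | var : ℕ → CForm
  | bot : CForm
  | neg : CForm → CForm
  | and : CForm → CForm → CForm
  | tensor : CForm → CForm → CForm
  | impl : CForm → CForm → CForm
  | box : CForm → CForm
  | dia : CForm → CForm

/-- Formulas of full modal downward closed team logic MT₀: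
φ ::= α | =(α₁,…,αₙ,β) | φ∧φ | φ⊗φ | φ∨φ | φ→φ | □φ | ◇φ, with α,αᵢ,β classical.
Classical formulas are embedded structurally; the primitive classical negation ¬α
is represented by the constructor `cneg`. -/
inductive MTForm : Type where
  | var : ℕ → MTForm
  | bot : MTForm
  | cneg : CForm → MTForm
  | dep : List CForm → CForm → MTForm
  | and : MTForm → MTForm → MTForm
  | tensor : MTForm → MTForm → MTForm
  | or : MTForm → MTForm → MTForm
  | impl : MTForm → MTForm → MTForm
  | box : MTForm → MTForm
  | dia : MTForm → MTForm

/-- The structural embedding of classical modal formulas into MT₀ formulas. -/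
def CForm.toMT : CForm → MTForm
  | .var p => .var p
  | .bot => .bot
  | .neg α => .cneg α
  | .and α β => .and α.toMT β.toMT
  | .tensor α β => .tensor α.toMT β.toMT
  | .impl α β => .impl α.toMT β.toMT
  | .box α => .box α.toMT
  | .dia α => .dia α.toMT

/-- A (classical modal) Kripke model M = (W,R,V) with W nonempty. -/
structure KModel where
  W : Type
  ne : Nonempty W
  R : W → W → Prop
  V : ℕ → Set W

/-- R(X) = {w : ∃ v ∈ X, vRw}. -/
def KModel.img (M : KModel) (X : Set M.W) : Set M.W := {w | ∃ v ∈ X, M.R v w}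

/-- Y is a successor team of X: Y ⊆ R(X) and Y ∩ R(w) ≠ ∅ for every w ∈ X. -/
def KModel.succT (M : KModel) (X Y : Set M.W) : Prop :=
  Y ⊆ M.img X ∧ ∀ w ∈ X, ∃ u ∈ Y, M.R w u

/-- Team semantics for classical modal formulas. -/
def KModel.csat (M : KModel) : Set M.W → CForm → Prop
  | X, .var p => X ⊆ M.V p
  | X, .bot => X = ∅
  | X, .neg α => ∀ w ∈ X, ¬ M.csat {w} α
  | X, .and α β => M.csat X α ∧ M.csat X β
  | X, .tensor α β => ∃ Y Z, X = Y ∪ Z ∧ M.csat Y α ∧ M.csat Z β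
  | X, .impl α β => ∀ Y ⊆ X, M.csat Y α → M.csat Y β
  | X, .box α => M.csat (M.img X) α
  | X, .dia α => ∃ Y, M.succT X Y ∧ M.csat Y α

/-- Team semantics for MT₀ formulas. -/
def KModel.sat (M : KModel) : Set M.W → MTForm → Prop
  | X, .var p => X ⊆ M.V p
  | X, .bot => X = ∅
  | X, .cneg α => ∀ w ∈ X, ¬ M.csat {w} α
  | X, .dep αs β => ∀ w ∈ X, ∀ u ∈ X,
      (∀ α ∈ αs, (M.csat {w} α ↔ M.csat {u} α)) → (M.csat {w} β ↔ M.csat {u} β)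
  | X, .and φ ψ => M.sat X φ ∧ M.sat X ψ
  | X, .tensor φ ψ => ∃ Y Z, X = Y ∪ Z ∧ M.sat Y φ ∧ M.sat Z ψ
  | X, .or φ ψ => M.sat X φ ∨ M.sat X ψ
  | X, .impl φ ψ => ∀ Y ⊆ X, M.sat Y φ → M.sat Y ψ
  | X, .box φ => M.sat (M.img X) φ
  | X, .dia φ => ∃ Y, M.succT X Y ∧ M.sat Y φ

/-- ⊨φ : truth on every team of every Kripke model. -/
def MTValid (φ : MTForm) : Prop := ∀ (M : KModel) (X : Set M.W), M.sat X φ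

/-- φ⊨ψ : semantic entailment. -/
def MTEntails (φ ψ : MTForm) : Prop := ∀ (M : KModel) (X : Set M.W), M.sat X φ → M.sat X ψ

open Set

lemma KModel.img_mono (M : KModel) {X Y : Set M.W} (h : Y ⊆ X) : M.img Y ⊆ M.img X := by
  rintro w ⟨v, hv, hr⟩; exact ⟨v, h hv, hr⟩

/-- MT₀ formulas are downward closed. -/
lemma sat_mono (M : KModel) (φ : MTForm) :
    ∀ {X Y : Set M.W}, Y ⊆ X → M.sat X φ → M.sat Y φ := by
  induction φ with
  | var p => intro X Y h hs; exact h.trans hs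
  | bot => intro X Y h hs; simp only [KModel.sat] at *; exact subset_empty_iff.mp (hs ▸ h)
  | cneg α => intro X Y h hs w hw; exact hs w (h hw)
  | dep αs β => intro X Y h hs w hw u hu; exact hs w (h hw) u (h hu)
  | and φ ψ ihφ ihψ => intro X Y h hs; exact ⟨ihφ h hs.1, ihψ h hs.2⟩
  | tensor φ ψ ihφ ihψ =>
    intro X Y h hs
    obtain ⟨A, B, rfl, hA, hB⟩ := hs
    refine ⟨Y ∩ A, Y ∩ B, ?_, ihφ inter_subset_right hA, ihψ inter_subset_right hB⟩
    rw [← inter_union_distrib_left]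
    exact (inter_eq_left.mpr h).symm
  | or φ ψ ihφ ihψ => intro X Y h hs; exact hs.imp (ihφ h) (ihψ h)
  | impl φ ψ ihφ ihψ => intro X Y h hs Z hZ; exact hs Z (hZ.trans h)
  | box φ ih => intro X Y h hs; exact ih (M.img_mono h) hs
  | dia φ ih =>
    intro X Y h hs
    obtain ⟨Z, ⟨hZ1, hZ2⟩, hZs⟩ := hs
    refine ⟨Z ∩ M.img Y, ⟨inter_subset_right, ?_⟩, ih inter_subset_left hZs⟩
    intro w hw
    obtain ⟨u, hu, hru⟩ := hZ2 w (h hw)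
    exact ⟨u, ⟨hu, ⟨w, hw, hru⟩⟩, hru⟩

section Transfer

variable {M N : KModel} {f : N.W → M.W}
  (hinj : Function.Injective f)
  (hR : ∀ a b, M.R (f a) (f b) ↔ N.R a b)
  (hout : ∀ a w, M.R (f a) w → w ∈ Set.range f)
  (hV : ∀ p a, f a ∈ M.V p ↔ a ∈ N.V p)

include hR hout in
lemma img_image (X : Set N.W) : M.img (f '' X) = f '' N.img X := by
  ext w; constructor
  · rintro ⟨v, ⟨a, ha, rfl⟩, hr⟩
    obtain ⟨b, rfl⟩ := hout a w hr
    exact ⟨b, ⟨a, ha, (hR a b).1 hr⟩, rfl⟩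
  · rintro ⟨b, ⟨a, ha, hr⟩, rfl⟩
    exact ⟨f a, ⟨a, ha, rfl⟩, (hR a b).2 hr⟩

include hinj hR hout in
lemma succT_image (X : Set N.W) (Y : Set M.W) :
    M.succT (f '' X) Y ↔ ∃ Y₀, Y = f '' Y₀ ∧ N.succT X Y₀ := by
  constructor
  · rintro ⟨h1, h2⟩
    rw [img_image hR hout] at h1
    have hYr : Y ⊆ Set.range f := h1.trans (image_subset_range _ _)
    refine ⟨f ⁻¹' Y, (Set.image_preimage_eq_of_subset hYr).symm, ?_, ?_⟩
    · intro b hb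
      obtain ⟨c, hc, hce⟩ := h1 hb
      rwa [← hinj hce]
    · intro a ha
      obtain ⟨u, huY, hru⟩ := h2 (f a) ⟨a, ha, rfl⟩
      obtain ⟨b, rfl⟩ := hout a u hru
      exact ⟨b, huY, (hR a b).1 hru⟩
  · rintro ⟨Y₀, rfl, h1, h2⟩
    constructor
    · rw [img_image hR hout]; exact image_mono h1
    · rintro w ⟨a, ha, rfl⟩
      obtain ⟨b, hb, hrb⟩ := h2 a ha
      exact ⟨f b, mem_image_of_mem _ hb, (hR a b).2 hrb⟩

include hinj in
lemma split_image {X : Set N.W} {A B : Set M.W} (h : f '' X = A ∪ B) :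
    X = f ⁻¹' A ∪ f ⁻¹' B ∧ A = f '' (f ⁻¹' A) ∧ B = f '' (f ⁻¹' B) := by
  have hA : A ⊆ Set.range f := by
    intro w hw
    have : w ∈ f '' X := h.symm ▸ Set.mem_union_left B hw
    exact this.imp fun a ha => ha.2
  have hB : B ⊆ Set.range f := by
    intro w hw
    have : w ∈ f '' X := h.symm ▸ Set.mem_union_right A hw
    exact this.imp fun a ha => ha.2
  refine ⟨?_, (Set.image_preimage_eq_of_subset hA).symm, (Set.image_preimage_eq_of_subset hB).symm⟩
  have := congrArg (f ⁻¹' ·) h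
  simpa [Set.preimage_image_eq _ hinj] using this

include hinj hR hout hV in
lemma csat_image : ∀ (α : CForm) (X : Set N.W), M.csat (f '' X) α ↔ N.csat X α := by
  intro α
  induction α with
  | var p =>
    intro X
    simp only [KModel.csat, image_subset_iff]
    constructor
    · intro h a ha; exact (hV p a).1 (h ha)
    · intro h a ha; exact (hV p a).2 (h ha)
  | bot => intro X; simp [KModel.csat]
  | neg α ih =>
    intro X
    simp only [KModel.csat]
    constructor
    · intro h a ha hc
      exact h (f a) (mem_image_of_mem _ ha) (by rw [← image_singleton, ih]; exact hc)
    · rintro h w ⟨a, ha, rfl⟩ hc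
      exact h a ha (by rw [← image_singleton, ih] at hc; exact hc)
  | and α β ihα ihβ => intro X; simp only [KModel.csat]; rw [ihα, ihβ]
  | tensor α β ihα ihβ =>
    intro X
    simp only [KModel.csat]
    constructor
    · rintro ⟨A, B, hAB, hA, hB⟩
      obtain ⟨hX, hA', hB'⟩ := split_image hinj hAB
      refine ⟨f ⁻¹' A, f ⁻¹' B, hX, ?_, ?_⟩
      · rw [← ihα]; rwa [← hA']
      · rw [← ihβ]; rwa [← hB']
    · rintro ⟨A, B, rfl, hA, hB⟩
      exact ⟨f '' A, f '' B, (image_union f A B), (ihα A).2 hA, (ihβ B).2 hB⟩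
  | impl α β ihα ihβ =>
    intro X
    simp only [KModel.csat]
    constructor
    · intro h Y hY hs
      have := h (f '' Y) (image_mono hY) ((ihα Y).2 hs)
      exact (ihβ Y).1 this
    · intro h Y hY hs
      have hYr : Y ⊆ Set.range f := hY.trans (image_subset_range _ _)
      have hE : Y = f '' (f ⁻¹' Y) := (Set.image_preimage_eq_of_subset hYr).symm
      have hsub : f ⁻¹' Y ⊆ X := by
        intro a ha
        obtain ⟨b, hb, hbe⟩ := hY ha
        rwa [← hinj hbe]
      rw [hE] at hs ⊢
      rw [ihα] at hs; rw [ihβ]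
      exact h _ hsub hs
  | box α ih =>
    intro X
    simp only [KModel.csat]
    rw [img_image hR hout, ih]
  | dia α ih =>
    intro X
    simp only [KModel.csat]
    constructor
    · rintro ⟨Y, hs, hY⟩
      obtain ⟨Y₀, rfl, hs₀⟩ := (succT_image hinj hR hout X Y).1 hs
      exact ⟨Y₀, hs₀, (ih Y₀).1 hY⟩
    · rintro ⟨Y₀, hs₀, hY⟩
      exact ⟨f '' Y₀, (succT_image hinj hR hout X _).2 ⟨Y₀, rfl, hs₀⟩, (ih Y₀).2 hY⟩

include hinj hR hout hV in
lemma sat_image : ∀ (φ : MTForm) (X : Set N.W), M.sat (f '' X) φ ↔ N.sat X φ := by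
  intro φ
  have hc : ∀ (α : CForm) (a : N.W), M.csat {f a} α ↔ N.csat {a} α := by
    intro α a; rw [← image_singleton]; exact csat_image hinj hR hout hV α {a}
  induction φ with
  | var p =>
    intro X
    simp only [KModel.sat, image_subset_iff]
    constructor
    · intro h a ha; exact (hV p a).1 (h ha)
    · intro h a ha; exact (hV p a).2 (h ha)
  | bot => intro X; simp [KModel.sat]
  | cneg α =>
    intro X
    simp only [KModel.sat]
    constructor
    · intro h a ha hcc; exact h (f a) (mem_image_of_mem _ ha) ((hc α a).2 hcc)
    · rintro h w ⟨a, ha, rfl⟩ hcc; exact h a ha ((hc α a).1 hcc)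
  | dep αs β =>
    intro X
    simp only [KModel.sat]
    constructor
    · rintro h a ha b hb hiff
      have := h (f a) (mem_image_of_mem _ ha) (f b) (mem_image_of_mem _ hb) ?_
      · rw [hc, hc] at this; exact this
      · intro α hα; rw [hc, hc]; exact hiff α hα
    · rintro h w ⟨a, ha, rfl⟩ u ⟨b, hb, rfl⟩ hiff
      rw [hc, hc]
      refine h a ha b hb fun α hα => ?_
      rw [← hc, ← hc]; exact hiff α hα
  | and φ ψ ihφ ihψ => intro X; simp only [KModel.sat]; rw [ihφ, ihψ]
  | tensor φ ψ ihφ ihψ =>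
    intro X
    simp only [KModel.sat]
    constructor
    · rintro ⟨A, B, hAB, hA, hB⟩
      obtain ⟨hX, hA', hB'⟩ := split_image hinj hAB
      refine ⟨f ⁻¹' A, f ⁻¹' B, hX, ?_, ?_⟩
      · rw [← ihφ]; rwa [← hA']
      · rw [← ihψ]; rwa [← hB']
    · rintro ⟨A, B, rfl, hA, hB⟩
      exact ⟨f '' A, f '' B, (image_union f A B), (ihφ A).2 hA, (ihψ B).2 hB⟩
  | or φ ψ ihφ ihψ => intro X; simp only [KModel.sat]; rw [ihφ, ihψ]
  | impl φ ψ ihφ ihψ =>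
    intro X
    simp only [KModel.sat]
    constructor
    · intro h Y hY hs
      exact (ihψ Y).1 (h (f '' Y) (image_mono hY) ((ihφ Y).2 hs))
    · intro h Y hY hs
      have hYr : Y ⊆ Set.range f := hY.trans (image_subset_range _ _)
      have hE : Y = f '' (f ⁻¹' Y) := (Set.image_preimage_eq_of_subset hYr).symm
      have hsub : f ⁻¹' Y ⊆ X := by
        intro a ha
        obtain ⟨b, hb, hbe⟩ := hY ha
        rwa [← hinj hbe]
      rw [hE] at hs ⊢
      rw [ihφ] at hs; rw [ihψ]
      exact h _ hsub hs
  | box φ ih =>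
    intro X
    simp only [KModel.sat]
    rw [img_image hR hout, ih]
  | dia φ ih =>
    intro X
    simp only [KModel.sat]
    constructor
    · rintro ⟨Y, hs, hY⟩
      obtain ⟨Y₀, rfl, hs₀⟩ := (succT_image hinj hR hout X Y).1 hs
      exact ⟨Y₀, hs₀, (ih Y₀).1 hY⟩
    · rintro ⟨Y₀, hs₀, hY⟩
      exact ⟨f '' Y₀, (succT_image hinj hR hout X _).2 ⟨Y₀, rfl, hs₀⟩, (ih Y₀).2 hY⟩

end Transfer

/-- Disjoint union of two Kripke models. -/
def sumModel (M₁ M₂ : KModel) : KModel where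
  W := M₁.W ⊕ M₂.W
  ne := ⟨Sum.inl M₁.ne.some⟩
  R := fun a b => match a, b with
    | .inl a, .inl b => M₁.R a b
    | .inr a, .inr b => M₂.R a b
    | _, _ => False
  V := fun p => Sum.inl '' M₁.V p ∪ Sum.inr '' M₂.V p

/-- Disjunction Property of MT₀. -/
theorem disjunction_property (φ ψ : MTForm) :
    MTValid (φ.or ψ) → MTValid φ ∨ MTValid ψ := by
  intro h
  by_contra hcon
  push_neg at hcon
  obtain ⟨hφ, hψ⟩ := hcon
  simp only [MTValid, not_forall] at hφ hψ
  obtain ⟨M₁, X₁, h₁⟩ := hφ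
  obtain ⟨M₂, X₂, h₂⟩ := hψ
  set M := sumModel M₁ M₂ with hM
  have hinj₁ : Function.Injective (Sum.inl : M₁.W → M.W) := Sum.inl_injective
  have hinj₂ : Function.Injective (Sum.inr : M₂.W → M.W) := Sum.inr_injective
  have hR₁ : ∀ a b, M.R (Sum.inl a) (Sum.inl b) ↔ M₁.R a b := fun a b => Iff.rfl
  have hR₂ : ∀ a b, M.R (Sum.inr a) (Sum.inr b) ↔ M₂.R a b := fun a b => Iff.rfl
  have hout₁ : ∀ a w, M.R (Sum.inl a) w → w ∈ Set.range (Sum.inl : M₁.W → M.W) := by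
    intro a w hr; cases w with
    | inl b => exact ⟨b, rfl⟩
    | inr b => exact hr.elim
  have hout₂ : ∀ a w, M.R (Sum.inr a) w → w ∈ Set.range (Sum.inr : M₂.W → M.W) := by
    intro a w hr; cases w with
    | inr b => exact ⟨b, rfl⟩
    | inl b => exact hr.elim
  have hV₁ : ∀ p a, Sum.inl a ∈ M.V p ↔ a ∈ M₁.V p := by
    intro p a
    constructor
    · rintro (⟨b, hb, hbe⟩ | ⟨b, hb, hbe⟩)
      · rwa [← Sum.inl_injective hbe]
      · exact absurd hbe (by simp)
    · intro hb; exact Or.inl ⟨a, hb, rfl⟩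
  have hV₂ : ∀ p a, Sum.inr a ∈ M.V p ↔ a ∈ M₂.V p := by
    intro p a
    constructor
    · rintro (⟨b, hb, hbe⟩ | ⟨b, hb, hbe⟩)
      · exact absurd hbe (by simp)
      · rwa [← Sum.inr_injective hbe]
    · intro hb; exact Or.inr ⟨a, hb, rfl⟩
  have hvalid := h M (Sum.inl '' X₁ ∪ Sum.inr '' X₂)
  simp only [KModel.sat] at hvalid
  cases hvalid with
  | inl hs =>
    exact h₁ ((sat_image hinj₁ hR₁ hout₁ hV₁ φ X₁).1
      (sat_mono M φ Set.subset_union_left hs))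
  | inr hs =>
    exact h₂ ((sat_image hinj₂ hR₂ hout₂ hV₂ ψ X₂).1
      (sat_mono M ψ Set.subset_union_right hs))
end

section
/- Finite Model Property: for every MT₀-formula φ, if ⊭φ (i.e., φ is not valid) then there exists a Kripke model M with finite domain and a finite team X such that M,X⊭φ. -/
section FMP

/-- Modal depth of classical formulas. -/
def CForm.mdepth : CForm → ℕ
  | .var _ => 0
  | .bot => 0
  | .neg α => α.mdepth
  | .and α β => max α.mdepth β.mdepth
  | .tensor α β => max α.mdepth β.mdepth
  | .impl α β => max α.mdepth β.mdepth
  | .box α => α.mdepth + 1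
  | .dia α => α.mdepth + 1

/-- Propositional variables of classical formulas. -/
def CForm.fvars : CForm → List ℕ
  | .var p => [p]
  | .bot => []
  | .neg α => α.fvars
  | .and α β => α.fvars ++ β.fvars
  | .tensor α β => α.fvars ++ β.fvars
  | .impl α β => α.fvars ++ β.fvars
  | .box α => α.fvars
  | .dia α => α.fvars

/-- Modal depth of MT₀ formulas. -/
def MTForm.mdepth : MTForm → ℕ
  | .var _ => 0
  | .bot => 0
  | .cneg α => α.mdepth
  | .dep αs β => (αs.map CForm.mdepth).foldr max β.mdepth
  | .and φ ψ => max φ.mdepth ψ.mdepth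
  | .tensor φ ψ => max φ.mdepth ψ.mdepth
  | .or φ ψ => max φ.mdepth ψ.mdepth
  | .impl φ ψ => max φ.mdepth ψ.mdepth
  | .box φ => φ.mdepth + 1
  | .dia φ => φ.mdepth + 1

/-- Propositional variables of MT₀ formulas. -/
def MTForm.fvars : MTForm → List ℕ
  | .var p => [p]
  | .bot => []
  | .cneg α => α.fvars
  | .dep αs β => αs.flatMap CForm.fvars ++ β.fvars
  | .and φ ψ => φ.fvars ++ ψ.fvars
  | .tensor φ ψ => φ.fvars ++ ψ.fvars
  | .or φ ψ => φ.fvars ++ ψ.fvars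
  | .impl φ ψ => φ.fvars ++ ψ.fvars
  | .box φ => φ.fvars
  | .dia φ => φ.fvars

theorem foldr_max_base (l : List ℕ) (b : ℕ) : b ≤ l.foldr max b := by
  induction l with
  | nil => simp
  | cons a l ih => exact le_trans ih (le_max_right _ _)

theorem foldr_max_mem (l : List ℕ) (b : ℕ) : ∀ a ∈ l, a ≤ l.foldr max b := by
  induction l with
  | nil => simp
  | cons c l ih =>
    intro a ha
    rcases List.mem_cons.mp ha with h | h
    · subst h; exact le_max_left _ _
    · exact le_trans (ih a h) (le_max_right _ _)

/-- Bounded bisimulation (w.r.t. variables in `L`) between two Kripke models. -/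
def Bis (M N : KModel) (L : List ℕ) : ℕ → M.W → N.W → Prop
  | 0, w, t => ∀ p ∈ L, (w ∈ M.V p ↔ t ∈ N.V p)
  | m+1, w, t => (∀ p ∈ L, (w ∈ M.V p ↔ t ∈ N.V p))
      ∧ (∀ u, M.R w u → ∃ t', N.R t t' ∧ Bis M N L m u t')
      ∧ (∀ t', N.R t t' → ∃ u, M.R w u ∧ Bis M N L m u t')

theorem Bis.atoms {M N : KModel} {L : List ℕ} :
    ∀ {m : ℕ} {w : M.W} {t : N.W}, Bis M N L m w t →
      ∀ p ∈ L, (w ∈ M.V p ↔ t ∈ N.V p)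
  | 0, _, _, h => h
  | _+1, _, _, h => h.1

/-- Team correspondence via bounded bisimulation. -/
def TCorr (M N : KModel) (L : List ℕ) (m : ℕ) (X : Set M.W) (X' : Set N.W) : Prop :=
  (∀ w ∈ X, ∃ t ∈ X', Bis M N L m w t) ∧ (∀ t ∈ X', ∃ w ∈ X, Bis M N L m w t)

theorem TCorr.single {M N : KModel} {L : List ℕ} {m : ℕ} {w : M.W} {t : N.W}
    (hb : Bis M N L m w t) : TCorr M N L m {w} {t} := by
  constructor
  · intro w' hw'
    rw [Set.mem_singleton_iff] at hw'; subst hw'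
    exact ⟨t, rfl, hb⟩
  · intro t' ht'
    rw [Set.mem_singleton_iff] at ht'; subst ht'
    exact ⟨w, rfl, hb⟩

theorem csat_invar {M N : KModel} {L : List ℕ} (α : CForm) :
    ∀ (m : ℕ) (X : Set M.W) (X' : Set N.W), TCorr M N L m X X' →
    α.mdepth ≤ m → (∀ p ∈ α.fvars, p ∈ L) →
    (M.csat X α ↔ N.csat X' α) := by
  induction α with
  | var p =>
    intro m X X' hC hd hv
    simp only [KModel.csat]
    constructor
    · intro hs t ht
      obtain ⟨w, hw, hb⟩ := hC.2 t ht
      exact (hb.atoms p (hv p (by simp [CForm.fvars]))).mp (hs hw)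
    · intro hs w hw
      obtain ⟨t, ht, hb⟩ := hC.1 w hw
      exact (hb.atoms p (hv p (by simp [CForm.fvars]))).mpr (hs ht)
  | bot =>
    intro m X X' hC hd hv
    simp only [KModel.csat, Set.eq_empty_iff_forall_notMem]
    constructor
    · intro h t ht; obtain ⟨w, hw, _⟩ := hC.2 t ht; exact h w hw
    · intro h w hw; obtain ⟨t, ht, _⟩ := hC.1 w hw; exact h t ht
  | neg α ih =>
    intro m X X' hC hd hv
    simp only [KModel.csat]
    constructor
    · intro h t ht
      obtain ⟨w, hw, hb⟩ := hC.2 t ht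
      exact fun hc => h w hw ((ih m _ _ (TCorr.single hb) hd hv).mpr hc)
    · intro h w hw
      obtain ⟨t, ht, hb⟩ := hC.1 w hw
      exact fun hc => h t ht ((ih m _ _ (TCorr.single hb) hd hv).mp hc)
  | and α β ihα ihβ =>
    intro m X X' hC hd hv
    have hdα : α.mdepth ≤ m := le_trans (le_max_left _ _) hd
    have hdβ : β.mdepth ≤ m := le_trans (le_max_right _ _) hd
    have hvα : ∀ p ∈ α.fvars, p ∈ L := fun p hp =>
      hv p (by simp only [CForm.fvars, List.mem_append]; exact Or.inl hp)
    have hvβ : ∀ p ∈ β.fvars, p ∈ L := fun p hp =>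
      hv p (by simp only [CForm.fvars, List.mem_append]; exact Or.inr hp)
    simp only [KModel.csat]
    rw [ihα m X X' hC hdα hvα, ihβ m X X' hC hdβ hvβ]
  | tensor α β ihα ihβ =>
    intro m X X' hC hd hv
    have hdα : α.mdepth ≤ m := le_trans (le_max_left _ _) hd
    have hdβ : β.mdepth ≤ m := le_trans (le_max_right _ _) hd
    have hvα : ∀ p ∈ α.fvars, p ∈ L := fun p hp =>
      hv p (by simp only [CForm.fvars, List.mem_append]; exact Or.inl hp)
    have hvβ : ∀ p ∈ β.fvars, p ∈ L := fun p hp =>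
      hv p (by simp only [CForm.fvars, List.mem_append]; exact Or.inr hp)
    simp only [KModel.csat]
    constructor
    · rintro ⟨Y, Z, rfl, hY, hZ⟩
      refine ⟨{t | t ∈ X' ∧ ∃ w ∈ Y, Bis M N L m w t},
              {t | t ∈ X' ∧ ∃ w ∈ Z, Bis M N L m w t}, ?_, ?_, ?_⟩
      · ext t
        constructor
        · intro ht
          obtain ⟨w, hw, hb⟩ := hC.2 t ht
          rcases hw with hw | hw
          · exact Or.inl ⟨ht, w, hw, hb⟩
          · exact Or.inr ⟨ht, w, hw, hb⟩
        · rintro (⟨ht, _⟩ | ⟨ht, _⟩) <;> exact ht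
      · refine (ihα m Y _ ?_ hdα hvα).mp hY
        constructor
        · intro w hw
          obtain ⟨t, ht, hb⟩ := hC.1 w (Set.mem_union_left _ hw)
          exact ⟨t, ⟨ht, w, hw, hb⟩, hb⟩
        · rintro t ⟨ht, w, hw, hb⟩; exact ⟨w, hw, hb⟩
      · refine (ihβ m Z _ ?_ hdβ hvβ).mp hZ
        constructor
        · intro w hw
          obtain ⟨t, ht, hb⟩ := hC.1 w (Set.mem_union_right _ hw)
          exact ⟨t, ⟨ht, w, hw, hb⟩, hb⟩
        · rintro t ⟨ht, w, hw, hb⟩; exact ⟨w, hw, hb⟩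
    · rintro ⟨Y', Z', rfl, hY, hZ⟩
      refine ⟨{w | w ∈ X ∧ ∃ t ∈ Y', Bis M N L m w t},
              {w | w ∈ X ∧ ∃ t ∈ Z', Bis M N L m w t}, ?_, ?_, ?_⟩
      · ext w
        constructor
        · intro hw
          obtain ⟨t, ht, hb⟩ := hC.1 w hw
          rcases ht with ht | ht
          · exact Or.inl ⟨hw, t, ht, hb⟩
          · exact Or.inr ⟨hw, t, ht, hb⟩
        · rintro (⟨hw, _⟩ | ⟨hw, _⟩) <;> exact hw
      · refine (ihα m _ Y' ?_ hdα hvα).mpr hY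
        constructor
        · rintro w ⟨hw, t, ht, hb⟩; exact ⟨t, ht, hb⟩
        · intro t ht
          obtain ⟨w, hw, hb⟩ := hC.2 t (Set.mem_union_left _ ht)
          exact ⟨w, ⟨hw, t, ht, hb⟩, hb⟩
      · refine (ihβ m _ Z' ?_ hdβ hvβ).mpr hZ
        constructor
        · rintro w ⟨hw, t, ht, hb⟩; exact ⟨t, ht, hb⟩
        · intro t ht
          obtain ⟨w, hw, hb⟩ := hC.2 t (Set.mem_union_right _ ht)
          exact ⟨w, ⟨hw, t, ht, hb⟩, hb⟩
  | impl α β ihα ihβ =>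
    intro m X X' hC hd hv
    have hdα : α.mdepth ≤ m := le_trans (le_max_left _ _) hd
    have hdβ : β.mdepth ≤ m := le_trans (le_max_right _ _) hd
    have hvα : ∀ p ∈ α.fvars, p ∈ L := fun p hp =>
      hv p (by simp only [CForm.fvars, List.mem_append]; exact Or.inl hp)
    have hvβ : ∀ p ∈ β.fvars, p ∈ L := fun p hp =>
      hv p (by simp only [CForm.fvars, List.mem_append]; exact Or.inr hp)
    simp only [KModel.csat]
    constructor
    · intro h Y' hY' hsatY'
      have hTC : TCorr M N L m {w | w ∈ X ∧ ∃ t ∈ Y', Bis M N L m w t} Y' := by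
        refine ⟨fun w hw => hw.2, fun t ht => ?_⟩
        obtain ⟨w, hw, hb⟩ := hC.2 t (hY' ht)
        exact ⟨w, ⟨hw, t, ht, hb⟩, hb⟩
      have := h _ (fun w hw => hw.1) ((ihα m _ Y' hTC hdα hvα).mpr hsatY')
      exact (ihβ m _ Y' hTC hdβ hvβ).mp this
    · intro h Y hY hsatY
      have hTC : TCorr M N L m Y {t | t ∈ X' ∧ ∃ w ∈ Y, Bis M N L m w t} := by
        refine ⟨fun w hw => ?_, fun t ht => ht.2⟩
        obtain ⟨t, ht, hb⟩ := hC.1 w (hY hw)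
        exact ⟨t, ⟨ht, w, hw, hb⟩, hb⟩
      have := h _ (fun t ht => ht.1) ((ihα m Y _ hTC hdα hvα).mp hsatY)
      exact (ihβ m Y _ hTC hdβ hvβ).mpr this
  | box α ih =>
    intro m X X' hC hd hv
    cases m with
    | zero =>
      exfalso
      have : α.mdepth + 1 ≤ 0 := hd
      omega
    | succ m =>
      have hd' : α.mdepth ≤ m := by
        have : α.mdepth + 1 ≤ m + 1 := hd
        omega
      have hTC : TCorr M N L m (M.img X) (N.img X') := by
        constructor
        · rintro u ⟨w, hw, hR⟩
          obtain ⟨t, ht, hb⟩ := hC.1 w hw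
          obtain ⟨t', hR', hb'⟩ := hb.2.1 u hR
          exact ⟨t', ⟨t, ht, hR'⟩, hb'⟩
        · rintro t' ⟨t, ht, hR'⟩
          obtain ⟨w, hw, hb⟩ := hC.2 t ht
          obtain ⟨u, hR, hb'⟩ := hb.2.2 t' hR'
          exact ⟨u, ⟨w, hw, hR⟩, hb'⟩
      simp only [KModel.csat]
      exact ih m _ _ hTC hd' hv
  | dia α ih =>
    intro m X X' hC hd hv
    cases m with
    | zero =>
      exfalso
      have : α.mdepth + 1 ≤ 0 := hd
      omega
    | succ m =>
      have hd' : α.mdepth ≤ m := by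
        have : α.mdepth + 1 ≤ m + 1 := hd
        omega
      simp only [KModel.csat]
      constructor
      · rintro ⟨Y, ⟨hYsub, hYsucc⟩, hY⟩
        refine ⟨{t' | (∃ t ∈ X', N.R t t') ∧ ∃ u ∈ Y, Bis M N L m u t'}, ⟨?_, ?_⟩, ?_⟩
        · intro t' ht'; exact ht'.1
        · intro t ht
          obtain ⟨w, hw, hb⟩ := hC.2 t ht
          obtain ⟨u, hu, hR⟩ := hYsucc w hw
          obtain ⟨t', hR', hb'⟩ := hb.2.1 u hR
          exact ⟨t', ⟨⟨t, ht, hR'⟩, u, hu, hb'⟩, hR'⟩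
        · refine (ih m Y _ ?_ hd' hv).mp hY
          constructor
          · intro u hu
            obtain ⟨w, hw, hR⟩ := hYsub hu
            obtain ⟨t, ht, hb⟩ := hC.1 w hw
            obtain ⟨t', hR', hb'⟩ := hb.2.1 u hR
            exact ⟨t', ⟨⟨t, ht, hR'⟩, u, hu, hb'⟩, hb'⟩
          · rintro t' ⟨_, u, hu, hb'⟩; exact ⟨u, hu, hb'⟩
      · rintro ⟨Y', ⟨hsub, hsucc⟩, hY'⟩
        refine ⟨{u | (∃ w ∈ X, M.R w u) ∧ ∃ t' ∈ Y', Bis M N L m u t'}, ⟨?_, ?_⟩, ?_⟩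
        · intro u hu; exact hu.1
        · intro w hw
          obtain ⟨t, ht, hb⟩ := hC.1 w hw
          obtain ⟨t', ht', hR'⟩ := hsucc t ht
          obtain ⟨u, hR, hb'⟩ := hb.2.2 t' hR'
          exact ⟨u, ⟨⟨w, hw, hR⟩, t', ht', hb'⟩, hR⟩
        · refine (ih m _ Y' ?_ hd' hv).mpr hY'
          constructor
          · rintro u ⟨_, t', ht', hb'⟩; exact ⟨t', ht', hb'⟩
          · intro t' ht'
            obtain ⟨t, ht, hR'⟩ := hsub ht'
            obtain ⟨w, hw, hb⟩ := hC.2 t ht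
            obtain ⟨u, hR, hb'⟩ := hb.2.2 t' hR'
            exact ⟨u, ⟨⟨w, hw, hR⟩, t', ht', hb'⟩, hb'⟩

theorem sat_invar {M N : KModel} {L : List ℕ} (φ : MTForm) :
    ∀ (m : ℕ) (X : Set M.W) (X' : Set N.W), TCorr M N L m X X' →
    φ.mdepth ≤ m → (∀ p ∈ φ.fvars, p ∈ L) →
    (M.sat X φ ↔ N.sat X' φ) := by
  induction φ with
  | var p =>
    intro m X X' hC hd hv
    simp only [KModel.sat]
    constructor
    · intro hs t ht
      obtain ⟨w, hw, hb⟩ := hC.2 t ht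
      exact (hb.atoms p (hv p (by simp [MTForm.fvars]))).mp (hs hw)
    · intro hs w hw
      obtain ⟨t, ht, hb⟩ := hC.1 w hw
      exact (hb.atoms p (hv p (by simp [MTForm.fvars]))).mpr (hs ht)
  | bot =>
    intro m X X' hC hd hv
    simp only [KModel.sat, Set.eq_empty_iff_forall_notMem]
    constructor
    · intro h t ht; obtain ⟨w, hw, _⟩ := hC.2 t ht; exact h w hw
    · intro h w hw; obtain ⟨t, ht, _⟩ := hC.1 w hw; exact h t ht
  | cneg α =>
    intro m X X' hC hd hv
    simp only [KModel.sat]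
    constructor
    · intro h t ht
      obtain ⟨w, hw, hb⟩ := hC.2 t ht
      exact fun hc => h w hw ((csat_invar α m _ _ (TCorr.single hb) hd hv).mpr hc)
    · intro h w hw
      obtain ⟨t, ht, hb⟩ := hC.1 w hw
      exact fun hc => h t ht ((csat_invar α m _ _ (TCorr.single hb) hd hv).mp hc)
  | dep αs β =>
    intro m X X' hC hd hv
    have hdβ : β.mdepth ≤ m := le_trans (foldr_max_base _ _) hd
    have hdα : ∀ α ∈ αs, α.mdepth ≤ m := fun α hα =>
      le_trans (foldr_max_mem _ _ _ (List.mem_map.mpr ⟨α, hα, rfl⟩)) hd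
    have hvβ : ∀ p ∈ β.fvars, p ∈ L := fun p hp =>
      hv p (by simp only [MTForm.fvars, List.mem_append]; exact Or.inr hp)
    have hvα : ∀ α ∈ αs, ∀ p ∈ α.fvars, p ∈ L := fun α hα p hp =>
      hv p (by
        simp only [MTForm.fvars, List.mem_append, List.mem_flatMap]
        exact Or.inl ⟨α, hα, hp⟩)
    simp only [KModel.sat]
    constructor
    · intro h t ht u' hu' hyp
      obtain ⟨w, hw, hb⟩ := hC.2 t ht
      obtain ⟨w', hw', hb'⟩ := hC.2 u' hu'
      have key := h w hw w' hw' (fun γ hγ => by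
        rw [csat_invar γ m _ _ (TCorr.single hb) (hdα γ hγ) (hvα γ hγ),
            csat_invar γ m _ _ (TCorr.single hb') (hdα γ hγ) (hvα γ hγ)]
        exact hyp γ hγ)
      rw [← csat_invar β m _ _ (TCorr.single hb) hdβ hvβ,
          ← csat_invar β m _ _ (TCorr.single hb') hdβ hvβ]
      exact key
    · intro h w hw w' hw' hyp
      obtain ⟨t, ht, hb⟩ := hC.1 w hw
      obtain ⟨t', ht', hb'⟩ := hC.1 w' hw'
      have key := h t ht t' ht' (fun γ hγ => by
        rw [← csat_invar γ m _ _ (TCorr.single hb) (hdα γ hγ) (hvα γ hγ),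
            ← csat_invar γ m _ _ (TCorr.single hb') (hdα γ hγ) (hvα γ hγ)]
        exact hyp γ hγ)
      rw [csat_invar β m _ _ (TCorr.single hb) hdβ hvβ,
          csat_invar β m _ _ (TCorr.single hb') hdβ hvβ]
      exact key
  | and φ ψ ihφ ihψ =>
    intro m X X' hC hd hv
    have hdφ : φ.mdepth ≤ m := le_trans (le_max_left _ _) hd
    have hdψ : ψ.mdepth ≤ m := le_trans (le_max_right _ _) hd
    have hvφ : ∀ p ∈ φ.fvars, p ∈ L := fun p hp =>
      hv p (by simp only [MTForm.fvars, List.mem_append]; exact Or.inl hp)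
    have hvψ : ∀ p ∈ ψ.fvars, p ∈ L := fun p hp =>
      hv p (by simp only [MTForm.fvars, List.mem_append]; exact Or.inr hp)
    simp only [KModel.sat]
    rw [ihφ m X X' hC hdφ hvφ, ihψ m X X' hC hdψ hvψ]
  | tensor φ ψ ihφ ihψ =>
    intro m X X' hC hd hv
    have hdφ : φ.mdepth ≤ m := le_trans (le_max_left _ _) hd
    have hdψ : ψ.mdepth ≤ m := le_trans (le_max_right _ _) hd
    have hvφ : ∀ p ∈ φ.fvars, p ∈ L := fun p hp =>
      hv p (by simp only [MTForm.fvars, List.mem_append]; exact Or.inl hp)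
    have hvψ : ∀ p ∈ ψ.fvars, p ∈ L := fun p hp =>
      hv p (by simp only [MTForm.fvars, List.mem_append]; exact Or.inr hp)
    simp only [KModel.sat]
    constructor
    · rintro ⟨Y, Z, rfl, hY, hZ⟩
      refine ⟨{t | t ∈ X' ∧ ∃ w ∈ Y, Bis M N L m w t},
              {t | t ∈ X' ∧ ∃ w ∈ Z, Bis M N L m w t}, ?_, ?_, ?_⟩
      · ext t
        constructor
        · intro ht
          obtain ⟨w, hw, hb⟩ := hC.2 t ht
          rcases hw with hw | hw
          · exact Or.inl ⟨ht, w, hw, hb⟩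
          · exact Or.inr ⟨ht, w, hw, hb⟩
        · rintro (⟨ht, _⟩ | ⟨ht, _⟩) <;> exact ht
      · refine (ihφ m Y _ ?_ hdφ hvφ).mp hY
        constructor
        · intro w hw
          obtain ⟨t, ht, hb⟩ := hC.1 w (Set.mem_union_left _ hw)
          exact ⟨t, ⟨ht, w, hw, hb⟩, hb⟩
        · rintro t ⟨ht, w, hw, hb⟩; exact ⟨w, hw, hb⟩
      · refine (ihψ m Z _ ?_ hdψ hvψ).mp hZ
        constructor
        · intro w hw
          obtain ⟨t, ht, hb⟩ := hC.1 w (Set.mem_union_right _ hw)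
          exact ⟨t, ⟨ht, w, hw, hb⟩, hb⟩
        · rintro t ⟨ht, w, hw, hb⟩; exact ⟨w, hw, hb⟩
    · rintro ⟨Y', Z', rfl, hY, hZ⟩
      refine ⟨{w | w ∈ X ∧ ∃ t ∈ Y', Bis M N L m w t},
              {w | w ∈ X ∧ ∃ t ∈ Z', Bis M N L m w t}, ?_, ?_, ?_⟩
      · ext w
        constructor
        · intro hw
          obtain ⟨t, ht, hb⟩ := hC.1 w hw
          rcases ht with ht | ht
          · exact Or.inl ⟨hw, t, ht, hb⟩
          · exact Or.inr ⟨hw, t, ht, hb⟩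
        · rintro (⟨hw, _⟩ | ⟨hw, _⟩) <;> exact hw
      · refine (ihφ m _ Y' ?_ hdφ hvφ).mpr hY
        constructor
        · rintro w ⟨hw, t, ht, hb⟩; exact ⟨t, ht, hb⟩
        · intro t ht
          obtain ⟨w, hw, hb⟩ := hC.2 t (Set.mem_union_left _ ht)
          exact ⟨w, ⟨hw, t, ht, hb⟩, hb⟩
      · refine (ihψ m _ Z' ?_ hdψ hvψ).mpr hZ
        constructor
        · rintro w ⟨hw, t, ht, hb⟩; exact ⟨t, ht, hb⟩
        · intro t ht
          obtain ⟨w, hw, hb⟩ := hC.2 t (Set.mem_union_right _ ht)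
          exact ⟨w, ⟨hw, t, ht, hb⟩, hb⟩
  | or φ ψ ihφ ihψ =>
    intro m X X' hC hd hv
    have hdφ : φ.mdepth ≤ m := le_trans (le_max_left _ _) hd
    have hdψ : ψ.mdepth ≤ m := le_trans (le_max_right _ _) hd
    have hvφ : ∀ p ∈ φ.fvars, p ∈ L := fun p hp =>
      hv p (by simp only [MTForm.fvars, List.mem_append]; exact Or.inl hp)
    have hvψ : ∀ p ∈ ψ.fvars, p ∈ L := fun p hp =>
      hv p (by simp only [MTForm.fvars, List.mem_append]; exact Or.inr hp)
    simp only [KModel.sat]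
    rw [ihφ m X X' hC hdφ hvφ, ihψ m X X' hC hdψ hvψ]
  | impl φ ψ ihφ ihψ =>
    intro m X X' hC hd hv
    have hdφ : φ.mdepth ≤ m := le_trans (le_max_left _ _) hd
    have hdψ : ψ.mdepth ≤ m := le_trans (le_max_right _ _) hd
    have hvφ : ∀ p ∈ φ.fvars, p ∈ L := fun p hp =>
      hv p (by simp only [MTForm.fvars, List.mem_append]; exact Or.inl hp)
    have hvψ : ∀ p ∈ ψ.fvars, p ∈ L := fun p hp =>
      hv p (by simp only [MTForm.fvars, List.mem_append]; exact Or.inr hp)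
    simp only [KModel.sat]
    constructor
    · intro h Y' hY' hsatY'
      have hTC : TCorr M N L m {w | w ∈ X ∧ ∃ t ∈ Y', Bis M N L m w t} Y' := by
        refine ⟨fun w hw => hw.2, fun t ht => ?_⟩
        obtain ⟨w, hw, hb⟩ := hC.2 t (hY' ht)
        exact ⟨w, ⟨hw, t, ht, hb⟩, hb⟩
      have := h _ (fun w hw => hw.1) ((ihφ m _ Y' hTC hdφ hvφ).mpr hsatY')
      exact (ihψ m _ Y' hTC hdψ hvψ).mp this
    · intro h Y hY hsatY
      have hTC : TCorr M N L m Y {t | t ∈ X' ∧ ∃ w ∈ Y, Bis M N L m w t} := by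
        refine ⟨fun w hw => ?_, fun t ht => ht.2⟩
        obtain ⟨t, ht, hb⟩ := hC.1 w (hY hw)
        exact ⟨t, ⟨ht, w, hw, hb⟩, hb⟩
      have := h _ (fun t ht => ht.1) ((ihφ m Y _ hTC hdφ hvφ).mp hsatY)
      exact (ihψ m Y _ hTC hdψ hvψ).mpr this
  | box φ ih =>
    intro m X X' hC hd hv
    cases m with
    | zero =>
      exfalso
      have : φ.mdepth + 1 ≤ 0 := hd
      omega
    | succ m =>
      have hd' : φ.mdepth ≤ m := by
        have : φ.mdepth + 1 ≤ m + 1 := hd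
        omega
      have hTC : TCorr M N L m (M.img X) (N.img X') := by
        constructor
        · rintro u ⟨w, hw, hR⟩
          obtain ⟨t, ht, hb⟩ := hC.1 w hw
          obtain ⟨t', hR', hb'⟩ := hb.2.1 u hR
          exact ⟨t', ⟨t, ht, hR'⟩, hb'⟩
        · rintro t' ⟨t, ht, hR'⟩
          obtain ⟨w, hw, hb⟩ := hC.2 t ht
          obtain ⟨u, hR, hb'⟩ := hb.2.2 t' hR'
          exact ⟨u, ⟨w, hw, hR⟩, hb'⟩
      simp only [KModel.sat]
      exact ih m _ _ hTC hd' hv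
  | dia φ ih =>
    intro m X X' hC hd hv
    cases m with
    | zero =>
      exfalso
      have : φ.mdepth + 1 ≤ 0 := hd
      omega
    | succ m =>
      have hd' : φ.mdepth ≤ m := by
        have : φ.mdepth + 1 ≤ m + 1 := hd
        omega
      simp only [KModel.sat]
      constructor
      · rintro ⟨Y, ⟨hYsub, hYsucc⟩, hY⟩
        refine ⟨{t' | (∃ t ∈ X', N.R t t') ∧ ∃ u ∈ Y, Bis M N L m u t'}, ⟨?_, ?_⟩, ?_⟩
        · intro t' ht'; exact ht'.1
        · intro t ht
          obtain ⟨w, hw, hb⟩ := hC.2 t ht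
          obtain ⟨u, hu, hR⟩ := hYsucc w hw
          obtain ⟨t', hR', hb'⟩ := hb.2.1 u hR
          exact ⟨t', ⟨⟨t, ht, hR'⟩, u, hu, hb'⟩, hR'⟩
        · refine (ih m Y _ ?_ hd' hv).mp hY
          constructor
          · intro u hu
            obtain ⟨w, hw, hR⟩ := hYsub hu
            obtain ⟨t, ht, hb⟩ := hC.1 w hw
            obtain ⟨t', hR', hb'⟩ := hb.2.1 u hR
            exact ⟨t', ⟨⟨t, ht, hR'⟩, u, hu, hb'⟩, hb'⟩
          · rintro t' ⟨_, u, hu, hb'⟩; exact ⟨u, hu, hb'⟩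
      · rintro ⟨Y', ⟨hsub, hsucc⟩, hY'⟩
        refine ⟨{u | (∃ w ∈ X, M.R w u) ∧ ∃ t' ∈ Y', Bis M N L m u t'}, ⟨?_, ?_⟩, ?_⟩
        · intro u hu; exact hu.1
        · intro w hw
          obtain ⟨t, ht, hb⟩ := hC.1 w hw
          obtain ⟨t', ht', hR'⟩ := hsucc t ht
          obtain ⟨u, hR, hb'⟩ := hb.2.2 t' hR'
          exact ⟨u, ⟨⟨w, hw, hR⟩, t', ht', hb'⟩, hR⟩
        · refine (ih m _ Y' ?_ hd' hv).mpr hY'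
          constructor
          · rintro u ⟨_, t', ht', hb'⟩; exact ⟨t', ht', hb'⟩
          · intro t' ht'
            obtain ⟨t, ht, hR'⟩ := hsub ht'
            obtain ⟨w, hw, hb⟩ := hC.2 t ht
            obtain ⟨u, hR, hb'⟩ := hb.2.2 t' hR'
            exact ⟨u, ⟨⟨w, hw, hR⟩, t', ht', hb'⟩, hb'⟩

/-- Hintikka types of depth `m` over `k` propositional variables. -/
def Ty (k : ℕ) : ℕ → Type
  | 0 => Fin k → Prop
  | m+1 => (Fin k → Prop) × Set (Ty k m)

instance tyFinite (k : ℕ) : ∀ m, Finite (Ty k m)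
  | 0 => inferInstanceAs (Finite (Fin k → Prop))
  | m+1 =>
    have := tyFinite k m
    inferInstanceAs (Finite ((Fin k → Prop) × Set (Ty k m)))

def tyDefault (k : ℕ) : Ty k 0 := fun _ => True

def atomOf (k : ℕ) : ∀ m, Ty k m → (Fin k → Prop)
  | 0, t => t
  | _+1, t => t.1

/-- The depth-`m` type of a world. -/
def tyW (M : KModel) (L : List ℕ) : ∀ m, M.W → Ty L.length m
  | 0, w => fun i => w ∈ M.V (L.get i)
  | m+1, w => (fun i => w ∈ M.V (L.get i), {t | ∃ u, M.R w u ∧ tyW M L m u = t})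

def NW (k n : ℕ) : Type := (m : Fin (n+1)) × Ty k m.val

instance (k n : ℕ) : Finite (NW k n) :=
  inferInstanceAs (Finite ((m : Fin (n+1)) × Ty k m.val))

/-- The finite canonical model of types of depth ≤ n. -/
def FM (M : KModel) (L : List ℕ) (n : ℕ) : KModel where
  W := NW L.length n
  ne := ⟨⟨⟨0, Nat.succ_pos n⟩, tyDefault L.length⟩⟩
  R := fun s t => ∃ h : s.1.val = t.1.val + 1,
    (cast (congrArg (Ty L.length) h) s.2).2 t.2
  V := fun p => {t | ∀ i : Fin L.length, L.get i = p → atomOf L.length t.1.val t.2 i}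

theorem atomOf_tyW (M : KModel) (L : List ℕ) :
    ∀ m (w : M.W), atomOf L.length m (tyW M L m w) = fun i => w ∈ M.V (L.get i)
  | 0, _ => rfl
  | _+1, _ => rfl

theorem bis_tyW (M : KModel) (L : List ℕ) (n : ℕ) :
    ∀ m, ∀ hm : m < n + 1, ∀ w : M.W,
      Bis M (FM M L n) L m w ⟨⟨m, hm⟩, tyW M L m w⟩ := by
  intro m
  induction m with
  | zero =>
    intro hm w p hp
    constructor
    · intro hwp i hip
      show w ∈ M.V (L.get i)
      rw [hip]; exact hwp
    · intro ht
      obtain ⟨i, hi⟩ := List.mem_iff_get.mp hp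
      have h2 : w ∈ M.V (L.get i) := ht i hi
      rw [← hi]; exact h2
  | succ m ih =>
    intro hm w
    have hm' : m < n + 1 := by omega
    refine ⟨?_, ?_, ?_⟩
    · intro p hp
      constructor
      · intro hwp i hip
        show w ∈ M.V (L.get i)
        rw [hip]; exact hwp
      · intro ht
        obtain ⟨i, hi⟩ := List.mem_iff_get.mp hp
        have h2 : w ∈ M.V (L.get i) := ht i hi
        rw [← hi]; exact h2
    · intro u hRu
      refine ⟨⟨⟨m, hm'⟩, tyW M L m u⟩, ⟨rfl, ?_⟩, ih hm' u⟩
      exact ⟨u, hRu, rfl⟩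
    · rintro ⟨⟨j, hj⟩, t⟩ ⟨h, hmem⟩
      obtain rfl : m = j := by
        have h' : m + 1 = j + 1 := h
        omega
      have hmem' : ∃ v, M.R w v ∧ tyW M L m v = t := hmem
      obtain ⟨v, hRv, rfl⟩ := hmem'
      exact ⟨v, hRv, ih hj v⟩

theorem finite_model_property' (φ : MTForm) (h : ¬ MTValid φ) :
    ∃ (M : KModel) (X : Set M.W), Finite M.W ∧ X.Finite ∧ ¬ M.sat X φ := by
  simp only [MTValid, not_forall] at h
  obtain ⟨M, X, hX⟩ := h
  have hfin : Finite (FM M φ.fvars φ.mdepth).W :=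
    inferInstanceAs (Finite (NW φ.fvars.length φ.mdepth))
  refine ⟨FM M φ.fvars φ.mdepth,
    {t | ∃ w ∈ X, t = ⟨⟨φ.mdepth, Nat.lt_succ_self _⟩, tyW M φ.fvars φ.mdepth w⟩},
    hfin, Set.toFinite _, ?_⟩
  intro hsat
  apply hX
  have hTC : TCorr M (FM M φ.fvars φ.mdepth) φ.fvars φ.mdepth X
      {t | ∃ w ∈ X, t = ⟨⟨φ.mdepth, Nat.lt_succ_self _⟩, tyW M φ.fvars φ.mdepth w⟩} := by
    constructor
    · intro w hw
      exact ⟨_, ⟨w, hw, rfl⟩, bis_tyW M φ.fvars φ.mdepth φ.mdepth (Nat.lt_succ_self _) w⟩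
    · rintro t ⟨w, hw, rfl⟩
      exact ⟨w, hw, bis_tyW M φ.fvars φ.mdepth φ.mdepth (Nat.lt_succ_self _) w⟩
  exact (sat_invar φ φ.mdepth X _ hTC le_rfl (fun p hp => hp)).mpr hsat

end FMP

/-- Finite Model Property of MT₀: every non-valid formula is refuted
in a Kripke model with finite domain on a finite team. -/
theorem finite_model_property (φ : MTForm) (h : ¬ MTValid φ) :
    ∃ (M : KModel) (X : Set M.W), Finite M.W ∧ X.Finite ∧ ¬ M.sat X φ := by
  exact finite_model_property' φ h
end

section
/- Team semantics coincides with single-world semantics on the powerset model: for every classical modal Kripke model M=(W,R,V), every nonempty team X⊆W and every MID⁻-formula φ, M,X⊨φ (team semantics) if and only if M°,X⊩φ (single-world satisfaction in the powerset model M° induced by M). -/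
/-- MID⁻-formulas (the dependence-atom-free fragment of modal intuitionistic
dependence logic): φ ::= p | ⊥ | φ∧φ | φ∨φ | φ→φ | □φ | ◇φ. -/
inductive MForm : Type where
  | var : ℕ → MForm
  | bot : MForm
  | and : MForm → MForm → MForm
  | or : MForm → MForm → MForm
  | impl : MForm → MForm → MForm
  | box : MForm → MForm
  | dia : MForm → MForm

/-- Team semantics for MID⁻ formulas. -/
def KModel.tsat (M : KModel) : Set M.W → MForm → Prop
  | X, .var p => X ⊆ M.V p
  | X, .bot => X = ∅
  | X, .and φ ψ => M.tsat X φ ∧ M.tsat X ψ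
  | X, .or φ ψ => M.tsat X φ ∨ M.tsat X ψ
  | X, .impl φ ψ => ∀ Y ⊆ X, M.tsat Y φ → M.tsat Y ψ
  | X, .box φ => M.tsat (M.img X) φ
  | X, .dia φ => ∃ Y, M.succT X Y ∧ M.tsat Y φ

/-- The data of a bi-relation intuitionistic Kripke model: a set of worlds, the
intuitionistic (accessibility) partial order ≥ (here `ge w v` reads "v is
accessible from w along ≥"), a modal accessibility relation R, and a valuation. -/
structure IModel where
  W : Type
  ge : W → W → Prop
  R : W → W → Prop
  V : ℕ → Set W

/-- Single-world satisfaction ⊩ on a bi-relation intuitionistic Kripke model. -/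
def IModel.isat (N : IModel) : N.W → MForm → Prop
  | w, .var p => w ∈ N.V p
  | _, .bot => False
  | w, .and φ ψ => N.isat w φ ∧ N.isat w ψ
  | w, .or φ ψ => N.isat w φ ∨ N.isat w ψ
  | w, .impl φ ψ => ∀ v, N.ge w v → N.isat v φ → N.isat v ψ
  | w, .box φ => ∀ u v, N.ge w u → N.R u v → N.isat v φ
  | w, .dia φ => ∃ v, N.R w v ∧ N.isat v φ

/-- The powerset model M° induced by a Kripke model M: the worlds are the nonempty
teams of M, ordered by the superset relation, with the successor-team relation as
modal accessibility, and X ∈ V°(p) iff X ⊆ V(p). -/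
def powModel (M : KModel) : IModel where
  W := {X : Set M.W // X.Nonempty}
  ge := fun X Y => Y.1 ⊆ X.1
  R := fun X Y => M.succT X.1 Y.1
  V := fun p => {X | X.1 ⊆ M.V p}

lemma tsat_empty (M : KModel) (φ : MForm) : M.tsat ∅ φ := by
  induction φ with
  | var p => exact Set.empty_subset _
  | bot => rfl
  | and φ ψ ihφ ihψ => exact ⟨ihφ, ihψ⟩
  | or φ ψ ihφ ihψ => exact Or.inl ihφ
  | impl φ ψ ihφ ihψ =>
    intro Y hY _
    rw [Set.subset_empty_iff] at hY; subst hY; exact ihψ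
  | box φ ih =>
    have : M.img ∅ = ∅ := by
      ext w; simp [KModel.img]
    simpa [KModel.tsat, this] using ih
  | dia φ ih =>
    exact ⟨∅, ⟨Set.empty_subset _, fun w hw => absurd hw (Set.notMem_empty w)⟩, ih⟩

lemma tsat_mono (M : KModel) (φ : MForm) : ∀ X Y : Set M.W,
    M.tsat X φ → Y ⊆ X → M.tsat Y φ := by
  induction φ with
  | var p => exact fun X Y h hYX => hYX.trans h
  | bot => intro X Y h hYX; rw [h, Set.subset_empty_iff] at hYX; exact hYX
  | and φ ψ ihφ ihψ => exact fun X Y h hYX => ⟨ihφ X Y h.1 hYX, ihψ X Y h.2 hYX⟩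
  | or φ ψ ihφ ihψ =>
    rintro X Y (h | h) hYX
    · exact Or.inl (ihφ X Y h hYX)
    · exact Or.inr (ihψ X Y h hYX)
  | impl φ ψ ihφ ihψ => exact fun X Y h hYX Z hZ hZφ => h Z (hZ.trans hYX) hZφ
  | box φ ih =>
    intro X Y h hYX
    exact ih (M.img X) (M.img Y) h (fun w ⟨v, hv, hr⟩ => ⟨v, hYX hv, hr⟩)
  | dia φ ih =>
    rintro X Y ⟨Z, ⟨hZ1, hZ2⟩, hZφ⟩ hYX
    refine ⟨Z ∩ M.img Y, ⟨Set.inter_subset_right, fun w hw => ?_⟩,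
      ih Z _ hZφ Set.inter_subset_left⟩
    obtain ⟨u, hu, hru⟩ := hZ2 w (hYX hw)
    exact ⟨u, ⟨hu, ⟨w, hw, hru⟩⟩, hru⟩

/-- STATEMENT 16: team semantics over M coincides with single-world semantics
over the powerset model M°, for every nonempty team and every MID⁻-formula. -/
theorem team_semantics_eq_powerset_semantics (M : KModel) (X : Set M.W)
    (hX : X.Nonempty) (φ : MForm) :
    M.tsat X φ ↔ (powModel M).isat ⟨X, hX⟩ φ := by
  induction φ generalizing X with
  | var p => exact Iff.rfl
  | bot =>
    simp only [KModel.tsat, IModel.isat, iff_false]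
    exact fun h => hX.ne_empty h
  | and φ ψ ihφ ihψ => exact and_congr (ihφ X hX) (ihψ X hX)
  | or φ ψ ihφ ihψ => exact or_congr (ihφ X hX) (ihψ X hX)
  | impl φ ψ ihφ ihψ =>
    constructor
    · rintro h ⟨Y, hY⟩ hYX hYφ
      exact (ihψ Y hY).mp (h Y hYX ((ihφ Y hY).mpr hYφ))
    · intro h Y hYX hYφ
      rcases Y.eq_empty_or_nonempty with rfl | hY
      · exact tsat_empty M ψ
      · exact (ihψ Y hY).mpr (h ⟨Y, hY⟩ hYX ((ihφ Y hY).mp hYφ))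
  | box φ ih =>
    constructor
    · rintro h ⟨u, hu⟩ ⟨v, hv⟩ huX ⟨hv1, hv2⟩
      have hvne : v.Nonempty := by
        obtain ⟨w, hw⟩ := hu
        obtain ⟨z, hz, _⟩ := hv2 w hw
        exact ⟨z, hz⟩
      refine (ih v hvne).mp (tsat_mono M φ (M.img X) v h ?_)
      exact hv1.trans fun w ⟨z, hz, hr⟩ => ⟨z, huX hz, hr⟩
    · intro h
      rcases (M.img X).eq_empty_or_nonempty with he | hne
      · show M.tsat (M.img X) φ
        rw [he]; exact tsat_empty M φ
      · set X' : Set M.W := {w ∈ X | ∃ v, M.R w v} with hX'def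
        have hXne : X'.Nonempty := by
          obtain ⟨w, z, hz, hr⟩ := hne
          exact ⟨z, hz, w, hr⟩
        have himg : M.img X ⊆ M.img X' := by
          rintro w ⟨z, hz, hr⟩
          exact ⟨z, ⟨hz, w, hr⟩, hr⟩
        have : (powModel M).isat ⟨M.img X, hne⟩ φ := by
          refine h ⟨X', hXne⟩ ⟨M.img X, hne⟩ (fun w hw => hw.1) ⟨himg, ?_⟩
          rintro w ⟨hwX, v, hv⟩
          exact ⟨v, ⟨w, hwX, hv⟩, hv⟩
        exact (ih (M.img X) hne).mpr this
  | dia φ ih =>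
    constructor
    · rintro ⟨Y, hXY, hY⟩
      have hYne : Y.Nonempty := by
        obtain ⟨w, hw⟩ := hX
        obtain ⟨z, hz, _⟩ := hXY.2 w hw
        exact ⟨z, hz⟩
      exact ⟨⟨Y, hYne⟩, hXY, (ih Y hYne).mp hY⟩
    · rintro ⟨⟨Y, hYne⟩, hXY, hY⟩
      exact ⟨Y, hXY, (ih Y hYne).mpr hY⟩
end

section
/- Frame correspondence for the box-distribution axiom: a bi-relation intuitionistic Kripke frame F=(W,≥,R) validates □(p∨q)→(□p∨□q) if and only if F satisfies condition (G1'): for all w,u,v∈W, if u,v∈(≥∘R)(w) then there exists t∈(≥∘R)(w) such that t≥u and t≥v. -/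
/-- A bi-relation intuitionistic Kripke frame F = (W,≥,R): W nonempty, ≥ a
partial order (here `ge w v` reads "w ≥ v", i.e. v is accessible from w along the
intuitionistic order), R a binary relation, satisfying conditions (F1) and (F2). -/
structure BiFrame where
  W : Type
  ne : Nonempty W
  ge : W → W → Prop
  R : W → W → Prop
  ge_refl : ∀ w, ge w w
  ge_trans : ∀ {w v u}, ge w v → ge v u → ge w u
  ge_antisymm : ∀ {w v}, ge w v → ge v w → w = v
  F1 : ∀ {w w' v}, ge w w' → R w v → ∃ v', ge v v' ∧ R w' v'
  F2 : ∀ {w v v'}, R w v → ge v v' → ∃ w', ge w w' ∧ R w' v'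

/-- A valuation on a bi-relation frame is monotone if w∈V(p) and w≥v imply v∈V(p). -/
def MonotoneVal (F : BiFrame) (V : ℕ → Set F.W) : Prop :=
  ∀ p w v, w ∈ V p → F.ge w v → v ∈ V p

/-- Single-world satisfaction ⊩ in the model (F,V). -/
def fsat (F : BiFrame) (V : ℕ → Set F.W) : F.W → MForm → Prop
  | w, .var p => w ∈ V p
  | _, .bot => False
  | w, .and φ ψ => fsat F V w φ ∧ fsat F V w ψ
  | w, .or φ ψ => fsat F V w φ ∨ fsat F V w ψ
  | w, .impl φ ψ => ∀ v, F.ge w v → fsat F V v φ → fsat F V v ψ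
  | w, .box φ => ∀ u v, F.ge w u → F.R u v → fsat F V v φ
  | w, .dia φ => ∃ v, F.R w v ∧ fsat F V v φ

/-- F validates φ: φ is satisfied at every world under every monotone valuation. -/
def FrameValid (F : BiFrame) (φ : MForm) : Prop :=
  ∀ V, MonotoneVal F V → ∀ w, fsat F V w φ

/-- Condition (G1'): for all w,u,v, if u,v ∈ (≥∘R)(w) then there exists
t ∈ (≥∘R)(w) with t≥u and t≥v. -/
def G1' (F : BiFrame) : Prop :=
  ∀ w u v : F.W, (∃ z, F.ge w z ∧ F.R z u) → (∃ z, F.ge w z ∧ F.R z v) →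
    ∃ t, (∃ z, F.ge w z ∧ F.R z t) ∧ F.ge t u ∧ F.ge t v

/-- a bi-relation intuitionistic Kripke frame validates
□(p∨q)→(□p∨□q) (for distinct variables p,q) iff it satisfies (G1'). -/
theorem boxOr_frame_correspondence (F : BiFrame) (p q : ℕ) (hpq : p ≠ q) :
    FrameValid F ((MForm.box ((MForm.var p).or (MForm.var q))).impl
      ((MForm.box (MForm.var p)).or (MForm.box (MForm.var q)))) ↔ G1' F := by
  constructor
  · intro hv w u v hu hv'
    by_cases ht : ∃ t, (∃ z, F.ge w z ∧ F.R z t) ∧ F.ge t u ∧ F.ge t v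
    · exact ht
    · exfalso
      set V : ℕ → Set F.W := fun r =>
        if r = p then {x | ¬ F.ge x u} else if r = q then {x | ¬ F.ge x v} else ∅ with hV
      have hmono : MonotoneVal F V := by
        intro r x y hx hxy
        simp only [hV] at hx ⊢
        split_ifs at hx ⊢ with h1 h2
        · exact fun hyu => hx (F.ge_trans hxy hyu)
        · exact fun hyv => hx (F.ge_trans hxy hyv)
        · exact hx
      have := hv V hmono w w (F.ge_refl w)
      have hbox : fsat F V w (MForm.box ((MForm.var p).or (MForm.var q))) := by
        intro a b hwa hab
        by_cases hbu : F.ge b u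
        · by_cases hbv : F.ge b v
          · exact absurd ⟨b, ⟨a, hwa, hab⟩, hbu, hbv⟩ ht
          · right
            simp only [fsat, hV, if_neg hpq.symm, if_pos rfl]
            exact hbv
        · left
          simp only [fsat, hV, if_pos rfl]
          exact hbu
      rcases this hbox with h | h
      · obtain ⟨z1, hz1, hz1u⟩ := hu
        have := h z1 u hz1 hz1u
        simp only [fsat, hV, if_pos rfl] at this
        exact this (F.ge_refl u)
      · obtain ⟨z2, hz2, hz2v⟩ := hv'
        have := h z2 v hz2 hz2v
        simp only [fsat, hV, if_neg hpq.symm, if_pos rfl] at this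
        exact this (F.ge_refl v)
  · intro hg V hmono w v hwv hbox
    by_contra hcon
    simp only [fsat, not_or] at hcon
    push_neg at hcon
    obtain ⟨hnp, hnq⟩ := hcon
    obtain ⟨a1, u1, ha1, hu1, hpu1⟩ := hnp
    obtain ⟨a2, u2, ha2, hu2, hqu2⟩ := hnq
    obtain ⟨t, ⟨z, hvz, hzt⟩, htu1, htu2⟩ := hg v u1 u2 ⟨a1, ha1, hu1⟩ ⟨a2, ha2, hu2⟩
    rcases hbox z t hvz hzt with h | h
    · exact hpu1 (hmono p t u1 h htu1)
    · exact hqu2 (hmono q t u2 h htu2)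
end

section
/- Frame correspondence for ¬□¬p→◇¬¬p: a ≥-saturated bi-relation intuitionistic Kripke frame F=(W,≥,R) validates ¬□¬p→◇¬¬p if and only if F satisfies condition (G2): for every w∈W and every set E of ≥-endpoints with E⊆R(E_w) and E∩R(v)≠∅ for every v∈E_w, there exists t∈W such that wRt and E_t⊆E. -/
/-- w is an ≥-endpoint. -/
def IsEnd (F : BiFrame) (w : F.W) : Prop := ∀ v, F.ge w v → v = w

/-- E_w : the set of all ≥-endpoints seen from w. -/
def Ends (F : BiFrame) (w : F.W) : Set F.W := {v | F.ge w v ∧ IsEnd F v}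

/-- R(E) = {u : ∃ v ∈ E, vRu}. -/
def Rimg (F : BiFrame) (E : Set F.W) : Set F.W := {u | ∃ v ∈ E, F.R v u}

/-- F is ≥-saturated: every E_w is nonempty, and every nonempty subset of E_w is
of the form E_v for some v with w≥v. -/
def Saturated (F : BiFrame) : Prop :=
  ∀ w, (Ends F w).Nonempty ∧
    ∀ E ⊆ Ends F w, E.Nonempty → ∃ v, F.ge w v ∧ Ends F v = E

/-- Condition (G2): for every w and every set E of ≥-endpoints with E ⊆ R(E_w)
and E ∩ R(v) ≠ ∅ for every v ∈ E_w, there is t with wRt and E_t ⊆ E. -/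
def G2 (F : BiFrame) : Prop :=
  ∀ (w : F.W) (E : Set F.W), (∀ e ∈ E, IsEnd F e) → E ⊆ Rimg F (Ends F w) →
    (∀ v ∈ Ends F w, ∃ u ∈ E, F.R v u) →
    ∃ t, F.R w t ∧ Ends F t ⊆ E

/-- STATEMENT 19: a ≥-saturated bi-relation intuitionistic Kripke frame validates
¬□¬p→◇¬¬p (where ¬χ abbreviates χ→⊥) iff it satisfies (G2). -/
theorem negBoxNeg_frame_correspondence (F : BiFrame) (p : ℕ) (hsat : Saturated F) :
    FrameValid F
      ((((MForm.var p).impl .bot).box.impl .bot).impl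
        (MForm.dia (((MForm.var p).impl .bot).impl .bot))) ↔ G2 F := by
  constructor
  · -- validity → G2
    intro hval w E hEnd hRimg hmeet
    have hmono : MonotoneVal F (fun _ => E) := by
      intro q x v hx hxv
      have hx' : v = x := hEnd x hx v hxv
      rwa [hx']
    have hpre : fsat F (fun _ => E) w (((MForm.var p).impl .bot).box.impl .bot) := by
      intro v hwv hbox
      obtain ⟨e, he⟩ := (hsat v).1
      have hew : e ∈ Ends F w := ⟨F.ge_trans hwv he.1, he.2⟩
      obtain ⟨u, huE, hru⟩ := hmeet e hew
      exact hbox e u he.1 hru u (F.ge_refl u) huE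
    obtain ⟨t, hwt, ht⟩ := hval (fun _ => E) hmono w w (F.ge_refl w) hpre
    refine ⟨t, hwt, ?_⟩
    intro e he
    by_contra heE
    apply ht e he.1
    intro x hex hx
    have hx' : x = e := he.2 x hex
    rw [hx'] at hx
    exact heE hx
  · -- G2 → validity
    intro hG2 V hV w v hwv hpre
    classical
    set E : Set F.W :=
      {e | IsEnd F e ∧ e ∈ Rimg F (Ends F v) ∧ fsat F V e (.var p)} with hE
    have h1 : ∀ e ∈ E, IsEnd F e := fun e he => he.1
    have h2 : E ⊆ Rimg F (Ends F v) := fun e he => he.2.1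
    have h3 : ∀ u ∈ Ends F v, ∃ x ∈ E, F.R u x := by
      intro u hu
      by_contra hc
      push_neg at hc
      apply hpre u hu.1
      intro a b hua hab
      have ha : a = u := hu.2 a hua
      intro c hbc hcp
      obtain ⟨e, hce, heEnd⟩ := (hsat c).1
      have hep : fsat F V e (.var p) := hV p c e hcp hce
      obtain ⟨u', huu', hu'e⟩ := F.F2 hab (F.ge_trans hbc hce)
      have hu'' : u' = u := hu.2 u' (ha ▸ huu')
      rw [hu''] at hu'e
      exact hc e ⟨heEnd, ⟨u, hu, hu'e⟩, hep⟩ hu'e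
    obtain ⟨t, hvt, htE⟩ := hG2 v E h1 h2 h3
    refine ⟨t, hvt, ?_⟩
    intro x htx hx
    obtain ⟨e, hxe, heEnd⟩ := (hsat x).1
    have heE : e ∈ E := htE ⟨F.ge_trans htx hxe, heEnd⟩
    exact hx e hxe heE.2.2
end
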